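/- arXiv:2505.03006 — 2 statements merged into one kernel-verified Lean document; each statement's English description precedes it below -/
import Mathlib

section
/- The Macdonald function $K_0$ satisfies $K_0(x)\sim \sqrt{\pi/(2x)}\,e^{-x}$ as $x\to\infty$; that is, $\lim_{x\to\infty} K_0(x)\,e^{x}\sqrt{2x/\pi} = 1$. -/
open MeasureTheory Real Filter

/-- The Macdonald function (modified Bessel function of the second kind) of order `0`,
`K₀(x) = ∫_0^∞ exp(-x cosh t) dt`. -/
noncomputable def besselK0 (x : ℝ) : ℝ :=
  ∫ t in Set.Ioi (0 : ℝ), Real.exp (-(x * Real.cosh t))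

open Set Topology
-- substitution lemma
lemma besselK0_subst (x : ℝ) (hx : 0 < x) :
    besselK0 x * Real.exp x = (2 / Real.sqrt (2 * x)) *
      ∫ u in Set.Ioi (0 : ℝ), (Real.sqrt (1 + u ^ 2 / (2 * x)))⁻¹ * Real.exp (-u ^ 2) := by
  set c := Real.sqrt (2 * x) with hcdef
  have hc : 0 < c := Real.sqrt_pos.2 (by linarith)
  have hc2 : c ^ 2 = 2 * x := Real.sq_sqrt (by linarith)
  set f : ℝ → ℝ := fun u => 2 * Real.arsinh (u / c) with hf_def
  set f' : ℝ → ℝ := fun u => 2 * ((Real.sqrt (1 + (u / c) ^ 2))⁻¹ * (1 / c)) with hf'_def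
  set g : ℝ → ℝ := fun t => Real.exp (x - x * Real.cosh t) with hg_def
  -- g (f u) = exp (-u^2)
  have hgf : ∀ u : ℝ, g (f u) = Real.exp (-u ^ 2) := by
    intro u
    have h1 : Real.cosh (f u) = 1 + 2 * (u / c) ^ 2 := by
      rw [hf_def]
      simp only
      rw [Real.cosh_two_mul, Real.cosh_sq, Real.sinh_arsinh]
      ring
    simp only [hg_def, h1]
    congr 1
    have : (u / c) ^ 2 = u ^ 2 / (2 * x) := by
      rw [div_pow, hc2]
    rw [this]
    field_simp
    ring
  have hf0 : f 0 = 0 := by simp [hf_def]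
  -- continuity of f
  have hf_cont : Continuous f := by
    exact continuous_const.mul (Real.continuous_arsinh.comp (continuous_id.div_const c))
  -- tendsto atTop
  have hft : Tendsto f atTop atTop := by
    rw [tendsto_atTop]
    intro b
    filter_upwards [eventually_ge_atTop (c * Real.sinh (b / 2))] with u hu
    have h1 : Real.sinh (b / 2) ≤ u / c := (le_div_iff₀ hc).2 (by linarith [hu])
    have h2 : b / 2 ≤ Real.arsinh (u / c) := by
      rw [← Real.arsinh_sinh (b / 2)]
      exact Real.arsinh_le_arsinh.2 h1
    simp only [hf_def]
    linarith
  -- derivative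
  have hff' : ∀ u : ℝ, HasDerivAt f (f' u) u := by
    intro u
    have h1 : HasDerivAt (fun y : ℝ => y / c) (1 / c) u := (hasDerivAt_id u).div_const c
    have h2 := (Real.hasDerivAt_arsinh (u / c)).comp u h1
    exact h2.const_mul 2
  -- integrability of g on Ici 0
  have hg_int : IntegrableOn g (Ici 0) := by
    have hbd : IntegrableOn (fun t : ℝ => Real.exp x * Real.exp (-x * t)) (Ici 0) := by
      rw [integrableOn_Ici_iff_integrableOn_Ioi]
      exact (exp_neg_integrableOn_Ioi 0 hx).const_mul _
    refine Integrable.mono hbd ?_ ?_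
    · exact ((Real.continuous_exp.comp (continuous_const.sub
        (continuous_const.mul Real.continuous_cosh))).aestronglyMeasurable)
    · rw [ae_restrict_iff' measurableSet_Ici]
      refine ae_of_all _ fun t ht => ?_
      have h1 : t ≤ Real.cosh t := by
        rcases le_or_gt t 0 with h | h
        · exact h.trans (by positivity)
        · calc t ≤ Real.sinh t := (Real.self_le_sinh_iff.2 h.le)
            _ ≤ Real.cosh t := (Real.sinh_lt_cosh t).le
      have h2 : g t ≤ Real.exp x * Real.exp (-x * t) := by
        rw [hg_def]
        simp only
        rw [← Real.exp_add]
        apply Real.exp_le_exp.2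
        nlinarith
      rw [Real.norm_eq_abs, Real.norm_eq_abs, abs_of_pos (Real.exp_pos _),
        abs_of_pos (mul_pos (Real.exp_pos _) (Real.exp_pos _))]
      exact h2
  -- image of f is within Ici 0
  have himg : f '' Ici 0 ⊆ Ici 0 := by
    rintro - ⟨u, hu, rfl⟩
    simp only [hf_def, mem_Ici]
    have : 0 ≤ Real.arsinh (u / c) := Real.arsinh_nonneg_iff.2 (div_nonneg hu hc.le)
    linarith
  -- integrability of (g ∘ f) * f'
  have hgf_int : IntegrableOn (fun u => (g ∘ f) u * f' u) (Ici 0) := by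
    have hbd : IntegrableOn (fun u : ℝ => (2 / c) * Real.exp (-1 * u ^ 2)) (Ici 0) := by
      exact ((integrable_exp_neg_mul_sq one_pos).const_mul _).integrableOn
    refine Integrable.mono hbd ?_ ?_
    · have hs : Continuous fun u : ℝ => Real.sqrt (1 + (u / c) ^ 2) :=
        Real.continuous_sqrt.comp (continuous_const.add ((continuous_id.div_const c).pow 2))
      have hfc : Continuous f' :=
        continuous_const.mul ((hs.inv₀ fun u => by positivity).mul continuous_const)
      have : Continuous fun u => (g ∘ f) u * f' u :=
        ((Real.continuous_exp.comp (continuous_const.sub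
          (continuous_const.mul (Real.continuous_cosh.comp hf_cont)))).mul hfc)
      exact this.aestronglyMeasurable
    · refine ae_of_all _ fun u => ?_
      have h1 : (g ∘ f) u = Real.exp (-u ^ 2) := hgf u
      have h2 : 0 < Real.sqrt (1 + (u / c) ^ 2) := by positivity
      have h3 : (1:ℝ) ≤ Real.sqrt (1 + (u / c) ^ 2) := by
        nlinarith [Real.sq_sqrt (show (0:ℝ) ≤ 1 + (u / c) ^ 2 by positivity),
          Real.sqrt_nonneg (1 + (u / c) ^ 2), sq_nonneg (u / c),
          sq_nonneg (Real.sqrt (1 + (u / c) ^ 2) - 1)]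
      have h4 : (Real.sqrt (1 + (u / c) ^ 2))⁻¹ ≤ 1 := by
        rw [inv_le_one_iff₀]; right; exact h3
      have h5 : 0 ≤ f' u := by
        show 0 ≤ 2 * ((Real.sqrt (1 + (u / c) ^ 2))⁻¹ * (1 / c))
        positivity
      have h6 : f' u ≤ 2 / c := by
        show 2 * ((Real.sqrt (1 + (u / c) ^ 2))⁻¹ * (1 / c)) ≤ 2 / c
        have hc' : 0 < 1 / c := by positivity
        have h7 : (Real.sqrt (1 + (u / c) ^ 2))⁻¹ * (1 / c) ≤ 1 * (1 / c) :=
          mul_le_mul_of_nonneg_right h4 hc'.le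
        calc 2 * ((Real.sqrt (1 + (u / c) ^ 2))⁻¹ * (1 / c)) ≤ 2 * (1 * (1 / c)) := by linarith
          _ = 2 / c := by ring
      have h1' : g (f u) = Real.exp (-u ^ 2) := hgf u
      calc ‖(g ∘ f) u * f' u‖ = Real.exp (-u ^ 2) * f' u := by
            rw [Real.norm_eq_abs, Function.comp_apply, h1',
              abs_of_nonneg (mul_nonneg (Real.exp_pos _).le h5)]
        _ ≤ Real.exp (-u ^ 2) * (2 / c) := by gcongr
        _ = ‖2 / c * Real.exp (-1 * u ^ 2)‖ := by
            rw [Real.norm_eq_abs, abs_of_nonneg (by positivity), neg_one_mul]; ring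
  -- continuity of g
  have hg_cont : Continuous g :=
    Real.continuous_exp.comp (continuous_const.sub (continuous_const.mul Real.continuous_cosh))
  have key := integral_comp_mul_deriv_Ioi (f := f) (f' := f') (g := g) (a := 0)
    hf_cont.continuousOn hft (fun u _ => (hff' u).hasDerivWithinAt)
    hg_cont.continuousOn (hg_int.mono_set himg) hgf_int
  have heq : ∀ u : ℝ, (g ∘ f) u * f' u =
      (2 / c) * ((Real.sqrt (1 + u ^ 2 / (2 * x)))⁻¹ * Real.exp (-u ^ 2)) := by
    intro u
    rw [Function.comp_apply, hgf u]
    show Real.exp (-u ^ 2) * (2 * ((Real.sqrt (1 + (u / c) ^ 2))⁻¹ * (1 / c))) = _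
    rw [div_pow, hc2]
    ring
  calc besselK0 x * Real.exp x
      = ∫ t in Set.Ioi (0:ℝ), Real.exp (-(x * Real.cosh t)) * Real.exp x :=
        (integral_mul_const _ _).symm
    _ = ∫ t in Set.Ioi (0:ℝ), g t := by
        simp_rw [hg_def, ← Real.exp_add, sub_eq_neg_add]
    _ = ∫ u in Set.Ioi (f 0), g u := by rw [hf0]
    _ = ∫ u in Set.Ioi (0:ℝ), (g ∘ f) u * f' u := key.symm
    _ = ∫ u in Set.Ioi (0:ℝ),
          (2 / c) * ((Real.sqrt (1 + u ^ 2 / (2 * x)))⁻¹ * Real.exp (-u ^ 2)) := by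
        simp_rw [heq]
    _ = (2 / c) * ∫ u in Set.Ioi (0:ℝ),
          (Real.sqrt (1 + u ^ 2 / (2 * x)))⁻¹ * Real.exp (-u ^ 2) := by
        rw [integral_const_mul]

theorem besselK0_asymptotic_infty :
    Tendsto (fun x : ℝ => besselK0 x * Real.exp x * Real.sqrt (2 * x / π)) atTop (nhds 1) := by
  set I : ℝ → ℝ := fun x => ∫ u in Set.Ioi (0:ℝ),
    (Real.sqrt (1 + u ^ 2 / (2 * x)))⁻¹ * Real.exp (-u ^ 2) with hI_def
  have hgauss : (∫ u in Set.Ioi (0:ℝ), Real.exp (-u ^ 2)) = Real.sqrt π / 2 := by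
    have := integral_gaussian_Ioi 1
    simpa using this
  -- dominated convergence
  have hDCT : Tendsto I atTop (𝓝 (Real.sqrt π / 2)) := by
    rw [← hgauss]
    refine tendsto_integral_filter_of_dominated_convergence
      (fun u => Real.exp (-u ^ 2)) ?_ ?_ ?_ ?_
    · filter_upwards with x
      have hs : Continuous fun u : ℝ => Real.sqrt (1 + u ^ 2 / (2 * x)) :=
        Real.continuous_sqrt.comp (continuous_const.add ((continuous_pow 2).div_const _))
      exact ((Measurable.inv hs.measurable).mul
        (Real.continuous_exp.comp (continuous_pow 2).neg).measurable).aestronglyMeasurable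
    · filter_upwards [eventually_gt_atTop (0:ℝ)] with x hx
      refine ae_of_all _ fun u => ?_
      have h2 : (1:ℝ) ≤ Real.sqrt (1 + u ^ 2 / (2 * x)) := by
        nlinarith [Real.sq_sqrt (show (0:ℝ) ≤ 1 + u ^ 2 / (2 * x) by positivity),
          Real.sqrt_nonneg (1 + u ^ 2 / (2 * x)), sq_nonneg u,
          sq_nonneg (Real.sqrt (1 + u ^ 2 / (2 * x)) - 1),
          div_nonneg (sq_nonneg u) (by linarith : (0:ℝ) ≤ 2 * x)]
      have h3 : (Real.sqrt (1 + u ^ 2 / (2 * x)))⁻¹ ≤ 1 := by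
        rw [inv_le_one_iff₀]; right; exact h2
      rw [Real.norm_eq_abs, abs_of_nonneg (mul_nonneg (by positivity) (Real.exp_pos _).le)]
      nlinarith [Real.exp_pos (-u ^ 2), inv_nonneg.2 (Real.sqrt_nonneg (1 + u ^ 2 / (2 * x)))]
    · have := integrable_exp_neg_mul_sq (b := 1) one_pos
      exact (by simpa using this.integrableOn : IntegrableOn (fun u : ℝ => Real.exp (-u ^ 2)) (Ioi 0))
    · refine ae_of_all _ fun u => ?_
      have h1 : Tendsto (fun x : ℝ => 1 + u ^ 2 / (2 * x)) atTop (𝓝 1) := by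
        have h0 : Tendsto (fun x : ℝ => u ^ 2 / (2 * x)) atTop (𝓝 0) := by
          have := (tendsto_inv_atTop_zero (𝕜 := ℝ)).comp
            (tendsto_id.const_mul_atTop (two_pos : (0:ℝ) < 2))
          have h := this.const_mul (u ^ 2)
          simpa [div_eq_mul_inv, Function.comp] using h
        simpa using tendsto_const_nhds.add h0
      have h2 : ContinuousAt (fun y : ℝ => (Real.sqrt y)⁻¹ * Real.exp (-u ^ 2)) 1 := by
        refine ContinuousAt.mul ?_ continuousAt_const
        exact (Real.continuous_sqrt.continuousAt).inv₀ (by simp)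
      have := h2.tendsto.comp h1
      simpa [Function.comp_def] using this
  have hfinal : Tendsto (fun x : ℝ => 2 / Real.sqrt π * I x) atTop (𝓝 1) := by
    have := hDCT.const_mul (2 / Real.sqrt π)
    have hπ : Real.sqrt π ≠ 0 := ne_of_gt (Real.sqrt_pos.2 Real.pi_pos)
    have hval : 2 / Real.sqrt π * (Real.sqrt π / 2) = 1 := by field_simp
    rwa [hval] at this
  refine Tendsto.congr' ?_ hfinal
  filter_upwards [eventually_gt_atTop (0:ℝ)] with x hx
  have hsub := besselK0_subst x hx
  have h1 : Real.sqrt (2 * x / π) = Real.sqrt (2 * x) / Real.sqrt π :=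
    Real.sqrt_div (by linarith) π
  have hs : Real.sqrt (2 * x) ≠ 0 := ne_of_gt (Real.sqrt_pos.2 (by linarith))
  have hπ : Real.sqrt π ≠ 0 := ne_of_gt (Real.sqrt_pos.2 Real.pi_pos)
  rw [hsub, h1]
  have hc2 : 2 / Real.sqrt (2 * x) * (Real.sqrt (2 * x) / Real.sqrt π) = 2 / Real.sqrt π := by
    field_simp
  calc 2 / Real.sqrt π * I x
      = 2 / Real.sqrt (2 * x) * (Real.sqrt (2 * x) / Real.sqrt π) * I x := by rw [hc2]
    _ = 2 / Real.sqrt (2 * x) * I x * (Real.sqrt (2 * x) / Real.sqrt π) := by ring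
end

section
/- Let $(\Omega,\mathcal F,\mathbb P)$ be a probability space, $X:\Omega\to\mathbb{R}^2$ a random variable with $X=x_0+\sigma B$ where $x_0\neq 0$, $\sigma>0$ and $B\sim N(0,\tau I_2)$ a two-dimensional centered Gaussian with variance $\tau>0$ per coordinate. Then $\sup_{\tau>0}\mathbb{E}\big[\,\big|\log|X|\,\big|\;;\;|X|\le |x_0|/2\big] < \infty$. -/
open MeasureTheory Real Set
open scoped ENNReal

private lemma neg_log_le_inv {y : ℝ} (hy : 0 < y) : -Real.log y ≤ y⁻¹ := by
  have h := Real.log_le_sub_one_of_pos (inv_pos.2 hy)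
  rw [Real.log_inv] at h
  have : (0:ℝ) < y⁻¹ := inv_pos.2 hy
  linarith

private lemma neg_log_le_rpow {x : ℝ} (hx : 0 < x) : -Real.log x ≤ 4 * x ^ (-(1/4) : ℝ) := by
  have h1 : (0:ℝ) < x ^ ((1/4):ℝ) := Real.rpow_pos_of_pos hx _
  have h2 := neg_log_le_inv h1
  rw [Real.log_rpow hx] at h2
  rw [Real.rpow_neg hx.le]
  linarith

private lemma abs_rpow_le (x : ℝ) : |x| ^ (-(1/4):ℝ) ≤ Real.sqrt 2 * x ^ (-(1/4):ℝ) := by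
  have hs2 : Real.sqrt 2 * Real.sqrt 2 = 2 := Real.mul_self_sqrt (by norm_num)
  have hs1 : (1:ℝ) ≤ Real.sqrt 2 := by nlinarith [Real.sqrt_nonneg 2]
  rcases lt_trichotomy x 0 with h | h | h
  · rw [abs_of_neg h, Real.rpow_def_of_neg h]
    have hc : Real.cos (-(1/4) * π) = Real.sqrt 2 / 2 := by
      rw [show (-(1/4) * π : ℝ) = -(π/4) by ring, Real.cos_neg, Real.cos_pi_div_four]
    have hlog : Real.log x = Real.log (-x) := by
      rw [← Real.log_abs, abs_of_neg h]
    have h2 : Real.exp (Real.log x * (-(1/4))) = (-x) ^ (-(1/4):ℝ) := by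
      rw [hlog, Real.rpow_def_of_pos (by linarith)]
    rw [hc, h2]
    have h3 : (0:ℝ) ≤ (-x) ^ (-(1/4):ℝ) := (Real.rpow_pos_of_pos (by linarith) _).le
    nlinarith
  · simp [h, Real.zero_rpow (by norm_num : (-(1/4):ℝ) ≠ 0)]
  · rw [abs_of_pos h]
    nlinarith [Real.rpow_pos_of_pos h (-(1/4):ℝ)]

private lemma rpow_quarter_nonneg (x : ℝ) : 0 ≤ x ^ (-(1/4):ℝ) := by
  have h := (Real.rpow_nonneg (abs_nonneg x) (-(1/4):ℝ)).trans (abs_rpow_le x)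
  have hs : (0:ℝ) < Real.sqrt 2 := Real.sqrt_pos.2 (by norm_num)
  nlinarith

private lemma rpow_quarter_measurable : Measurable fun x : ℝ => x ^ (-(1/4):ℝ) :=
  measurable_of_continuousOn_compl_singleton 0 fun x hx =>
    (Real.continuousAt_rpow_const x _ (Or.inl hx)).continuousWithinAt

private lemma key_lintegral (R : ℝ) (hR : 0 < R) :
    ∫⁻ z : EuclideanSpace ℝ (Fin 2), {z : EuclideanSpace ℝ (Fin 2) | ‖z‖ ≤ R}.indicator
      (fun z => ENNReal.ofReal |Real.log ‖z‖|) z < ⊤ := by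
  set φ : EuclideanSpace ℝ (Fin 2) → ℝ≥0∞ := {z : EuclideanSpace ℝ (Fin 2) | ‖z‖ ≤ R}.indicator
      (fun z => ENNReal.ofReal |Real.log ‖z‖|) with hφ
  have hS : MeasurableSet {z : EuclideanSpace ℝ (Fin 2) | ‖z‖ ≤ R} :=
    measurableSet_le measurable_norm measurable_const
  have hφm : Measurable φ :=
    ((Real.measurable_log.comp measurable_norm).abs.ennreal_ofReal).indicator hS
  -- transport to ℝ × ℝ
  have e1 : MeasurePreserving (MeasurableEquiv.toLp 2 (Fin 2 → ℝ)) volume volume :=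
    (EuclideanSpace.volume_preserving_symm_measurableEquiv_toLp (Fin 2)).symm
  have e2 := (volume_preserving_finTwoArrow ℝ).symm
  have hcm : Measurable (fun y : Fin 2 → ℝ =>
      φ ((MeasurableEquiv.toLp 2 (Fin 2 → ℝ)) y)) :=
    hφm.comp (MeasurableEquiv.measurable _)
  rw [← e1.lintegral_comp hφm, ← e2.lintegral_comp hcm]
  -- the norm in coordinates
  have hnorm : ∀ p : ℝ × ℝ,
      ‖(MeasurableEquiv.toLp 2 (Fin 2 → ℝ)) ((MeasurableEquiv.finTwoArrow).symm p)‖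
        = Real.sqrt (p.1^2 + p.2^2) := by
    intro p
    rw [EuclideanSpace.norm_eq]
    congr 1
    simp [Fin.sum_univ_two, MeasurableEquiv.finTwoArrow, MeasurableEquiv.coe_toLp]
  -- comparison functions
  set c : ℝ := max (Real.log R) 0 with hc
  set g : ℝ → ℝ := fun x => 4 * Real.sqrt 2 * x ^ (-(1/4):ℝ) + c with hg
  set F : ℝ → ℝ≥0∞ := fun x => (Set.Icc (-R) R).indicator (fun x => ENNReal.ofReal (g x)) x with hF
  set G : ℝ → ℝ≥0∞ := fun y => (Set.Icc (-R) R).indicator (fun _ => (1:ℝ≥0∞)) y with hG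
  have hgnonneg : ∀ x : ℝ, 0 ≤ g x := by
    intro x
    have h1 := rpow_quarter_nonneg x
    have h2 : (0:ℝ) ≤ 4 * Real.sqrt 2 * x ^ (-(1/4):ℝ) := by positivity
    have hc0 : (0:ℝ) ≤ c := le_max_right _ _
    simp only [hg]
    linarith
  have hFm : Measurable F :=
    (((rpow_quarter_measurable.const_mul _).add_const _).ennreal_ofReal).indicator
      measurableSet_Icc
  have hGm : Measurable G := measurable_const.indicator measurableSet_Icc
  -- a.e. bound
  have hae : ∀ᵐ p : ℝ × ℝ, p.1 ≠ 0 := by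
    rw [ae_iff]
    have hset : {p : ℝ × ℝ | ¬ p.1 ≠ 0} = ({0} : Set ℝ) ×ˢ (Set.univ : Set ℝ) := by
      ext ⟨a, b⟩; simp [eq_comm]
    rw [hset, Measure.volume_eq_prod, Measure.prod_prod]
    simp
  have hbound : ∀ p : ℝ × ℝ, p.1 ≠ 0 →
      φ ((MeasurableEquiv.toLp 2 (Fin 2 → ℝ)) ((MeasurableEquiv.finTwoArrow).symm p))
        ≤ F p.1 * G p.2 := by
    intro p hp
    simp only [hφ, Set.indicator_apply, Set.mem_setOf_eq, hnorm p]
    by_cases hN : Real.sqrt (p.1^2 + p.2^2) ≤ R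
    · rw [if_pos hN]
      have h1 : |p.1| ≤ Real.sqrt (p.1^2 + p.2^2) := by
        rw [← Real.sqrt_sq_eq_abs p.1]
        exact Real.sqrt_le_sqrt (by nlinarith)
      have h2 : |p.2| ≤ Real.sqrt (p.1^2 + p.2^2) := by
        rw [← Real.sqrt_sq_eq_abs p.2]
        exact Real.sqrt_le_sqrt (by nlinarith)
      have hp1 : p.1 ∈ Set.Icc (-R) R := by
        rw [Set.mem_Icc, ← abs_le]; exact h1.trans hN
      have hp2 : p.2 ∈ Set.Icc (-R) R := by
        rw [Set.mem_Icc, ← abs_le]; exact h2.trans hN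
      rw [hF, hG]
      simp only [Set.indicator_of_mem hp1, Set.indicator_of_mem hp2, mul_one]
      apply ENNReal.ofReal_le_ofReal
      set N := Real.sqrt (p.1^2 + p.2^2) with hNdef
      have habs : 0 < |p.1| := abs_pos.2 hp
      have hNpos : 0 < N := lt_of_lt_of_le habs h1
      have hterm : (0:ℝ) ≤ 4 * (Real.sqrt 2 * p.1 ^ (-(1/4):ℝ)) :=
        mul_nonneg (by norm_num)
          ((Real.rpow_nonneg (abs_nonneg p.1) _).trans (abs_rpow_le p.1))
      rcases le_or_gt N 1 with hN1 | hN1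
      · have hlog : |Real.log N| = -Real.log N :=
          abs_of_nonpos (Real.log_nonpos hNpos.le hN1)
        have hmono : Real.log |p.1| ≤ Real.log N := Real.log_le_log habs h1
        have h4 : -Real.log |p.1| ≤ 4 * |p.1| ^ (-(1/4):ℝ) := neg_log_le_rpow habs
        have h5 : |p.1| ^ (-(1/4):ℝ) ≤ Real.sqrt 2 * p.1 ^ (-(1/4):ℝ) := abs_rpow_le p.1
        have hc0 : (0:ℝ) ≤ c := le_max_right _ _
        rw [hlog, hg]
        have : -Real.log N ≤ 4 * (Real.sqrt 2 * p.1 ^ (-(1/4):ℝ)) := by linarith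
        linarith [this]
      · have hlog : |Real.log N| = Real.log N := abs_of_nonneg (Real.log_nonneg hN1.le)
        have : Real.log N ≤ Real.log R := Real.log_le_log hNpos hN
        have hc1 : Real.log N ≤ c := this.trans (le_max_left _ _)
        rw [hlog, hg]
        linarith
    · rw [if_neg hN]
      exact zero_le
  calc ∫⁻ p : ℝ × ℝ, φ ((MeasurableEquiv.toLp 2 (Fin 2 → ℝ))
          ((MeasurableEquiv.finTwoArrow).symm p))
      ≤ ∫⁻ p : ℝ × ℝ, F p.1 * G p.2 := by
        refine lintegral_mono_ae ?_
        filter_upwards [hae] with p hp using hbound p hp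
    _ < ⊤ := by
        rw [Measure.volume_eq_prod, lintegral_prod_mul hFm.aemeasurable hGm.aemeasurable]
        have hGfin : ∫⁻ y : ℝ, G y < ⊤ := by
          rw [hG, lintegral_indicator measurableSet_Icc, setLIntegral_const,
            Real.volume_Icc, one_mul]
          exact ENNReal.ofReal_lt_top
        have hFfin : ∫⁻ x : ℝ, F x < ⊤ := by
          rw [hF, lintegral_indicator measurableSet_Icc]
          have hint : IntegrableOn g (Set.Icc (-R) R) volume := by
            have h1 : IntervalIntegrable (fun x : ℝ => x ^ (-(1/4):ℝ)) volume (-R) R :=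
              intervalIntegral.intervalIntegrable_rpow' (by norm_num)
            rw [intervalIntegrable_iff', Set.uIcc_of_le (by linarith)] at h1
            exact (h1.const_mul (4 * Real.sqrt 2)).add
              (integrableOn_const measure_Icc_lt_top.ne)
          rw [lt_top_iff_ne_top,
            lintegral_ofReal_ne_top_iff_integrable hint.aestronglyMeasurable
              (ae_of_all _ hgnonneg)]
          exact hint
        exact ENNReal.mul_lt_top hFfin hGfin

private lemma aux_tau {a τ : ℝ} (ha : 0 < a) (hτ : 0 < τ) :
    τ⁻¹ * Real.exp (-(a/τ)) ≤ (Real.exp 1 * a)⁻¹ := by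
  have h2 : a/τ ≤ Real.exp (a/τ) / Real.exp 1 := by
    have := Real.add_one_le_exp (a/τ - 1)
    rw [Real.exp_sub] at this
    linarith
  have h3 : a/τ * Real.exp 1 ≤ Real.exp (a/τ) := (le_div_iff₀ (Real.exp_pos 1)).1 h2
  have h4 : Real.exp 1 * a ≤ τ * Real.exp (a/τ) := by
    calc Real.exp 1 * a = τ * (a/τ * Real.exp 1) := by field_simp
    _ ≤ τ * Real.exp (a/τ) := mul_le_mul_of_nonneg_left h3 hτ.le
  rw [Real.exp_neg, ← mul_inv]
  exact inv_anti₀ (by positivity) h4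


theorem gaussian_log_moment_uniform_bound (x0 : EuclideanSpace ℝ (Fin 2)) (hx0 : x0 ≠ 0)
    (σ : ℝ) (hσ : 0 < σ) :
    ∃ C : NNReal, ∀ (Ω : Type) (_ : MeasurableSpace Ω) (P : Measure Ω),
      IsProbabilityMeasure P → ∀ (X : Ω → EuclideanSpace ℝ (Fin 2)) (τ : ℝ), 0 < τ →
      P.map X = volume.withDensity (fun z : EuclideanSpace ℝ (Fin 2) =>
        ENNReal.ofReal ((2 * π * σ ^ 2 * τ)⁻¹ * Real.exp (-‖z - x0‖ ^ 2 / (2 * σ ^ 2 * τ)))) →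
      (∫⁻ ω, {ω' | ‖X ω'‖ ≤ ‖x0‖ / 2}.indicator
          (fun ω' => ENNReal.ofReal |Real.log ‖X ω'‖|) ω ∂P) ≤ C := by
  have hx0n : 0 < ‖x0‖ := norm_pos_iff.2 hx0
  set R : ℝ := ‖x0‖ / 2 with hRdef
  have hR : 0 < R := by positivity
  set a : ℝ := ‖x0‖^2 / (8 * σ^2) with ha
  have ha0 : 0 < a := by positivity
  set M : ℝ := (2 * π * σ^2)⁻¹ * (Real.exp 1 * a)⁻¹ with hM
  set φ : EuclideanSpace ℝ (Fin 2) → ℝ≥0∞ := {z : EuclideanSpace ℝ (Fin 2) | ‖z‖ ≤ R}.indicator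
      (fun z => ENNReal.ofReal |Real.log ‖z‖|) with hφ
  have hS : MeasurableSet {z : EuclideanSpace ℝ (Fin 2) | ‖z‖ ≤ R} :=
    measurableSet_le measurable_norm measurable_const
  have hφm : Measurable φ :=
    ((Real.measurable_log.comp measurable_norm).abs.ennreal_ofReal).indicator hS
  have hJ : ∫⁻ z, φ z < ⊤ := key_lintegral R hR
  have hBne : ENNReal.ofReal M * ∫⁻ z, φ z ≠ ⊤ :=
    ENNReal.mul_ne_top ENNReal.ofReal_ne_top hJ.ne
  refine ⟨(ENNReal.ofReal M * ∫⁻ z, φ z).toNNReal, ?_⟩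
  intro Ω mΩ P hP X τ hτ hmap
  set f : EuclideanSpace ℝ (Fin 2) → ℝ≥0∞ := fun z =>
      ENNReal.ofReal ((2 * π * σ ^ 2 * τ)⁻¹ * Real.exp (-‖z - x0‖ ^ 2 / (2 * σ ^ 2 * τ)))
      with hf
  have hfm : Measurable f := by
    apply Measurable.ennreal_ofReal
    exact (((measurable_id.sub_const x0).norm.pow_const 2).neg.div_const _).exp.const_mul _
  have hfpos : ∀ z, 0 < f z := by
    intro z
    apply ENNReal.ofReal_pos.2
    have hπ := Real.pi_pos
    positivity
  have hXm : AEMeasurable X P := by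
    by_contra h
    rw [Measure.map_of_not_aemeasurable h] at hmap
    have h2 : volume.withDensity f = 0 := hmap.symm
    have h3 := congrArg (fun μ : Measure (EuclideanSpace ℝ (Fin 2)) => μ Set.univ) h2
    simp only [Measure.coe_zero, Pi.zero_apply] at h3
    rw [withDensity_apply _ MeasurableSet.univ, Measure.restrict_univ] at h3
    have hpos : 0 < ∫⁻ z, f z := by
      rw [lintegral_pos_iff_support hfm]
      have hsupp : Function.support f = Set.univ :=
        Set.eq_univ_of_forall fun z => (hfpos z).ne'
      rw [hsupp]
      exact lt_of_lt_of_le (Metric.measure_ball_pos volume (0 : EuclideanSpace ℝ (Fin 2))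
        one_pos) (measure_mono (Set.subset_univ _))
    exact absurd h3 hpos.ne'
  have hbound : ∀ z, (f * φ) z ≤ ENNReal.ofReal M * φ z := by
    intro z
    by_cases hz : z ∈ {z : EuclideanSpace ℝ (Fin 2) | ‖z‖ ≤ R}
    · refine mul_le_mul_left ?_ (φ z)
      apply ENNReal.ofReal_le_ofReal
      have hz' : ‖z‖ ≤ R := hz
      have hd : R ≤ ‖z - x0‖ := by
        have h1 : ‖x0‖ - ‖z‖ ≤ ‖x0 - z‖ := norm_sub_norm_le x0 z
        rw [norm_sub_rev] at h1
        rw [hRdef] at hz' ⊢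
        linarith
      have hsq : R^2 ≤ ‖z - x0‖^2 := by nlinarith [norm_nonneg (z - x0)]
      have h2σ : (0:ℝ) < 2 * σ^2 * τ := by positivity
      have hexp : Real.exp (-‖z - x0‖ ^ 2 / (2 * σ ^ 2 * τ)) ≤ Real.exp (-(a/τ)) := by
        apply Real.exp_le_exp.2
        have heq : -(a/τ) = -(R^2) / (2 * σ^2 * τ) := by
          rw [ha, hRdef]; field_simp; ring
        rw [heq, div_eq_mul_inv, div_eq_mul_inv]
        exact mul_le_mul_of_nonneg_right (neg_le_neg hsq) (inv_nonneg.2 h2σ.le)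
      have hπ := Real.pi_pos
      have hinv : (0:ℝ) ≤ (2 * π * σ^2)⁻¹ := by positivity
      calc (2 * π * σ ^ 2 * τ)⁻¹ * Real.exp (-‖z - x0‖ ^ 2 / (2 * σ ^ 2 * τ))
          = (2 * π * σ^2)⁻¹ * (τ⁻¹ * Real.exp (-‖z - x0‖ ^ 2 / (2 * σ ^ 2 * τ))) := by
            rw [mul_inv]; ring
        _ ≤ (2 * π * σ^2)⁻¹ * (τ⁻¹ * Real.exp (-(a/τ))) :=
            mul_le_mul_of_nonneg_left
              (mul_le_mul_of_nonneg_left hexp (inv_nonneg.2 hτ.le)) hinv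
        _ ≤ (2 * π * σ^2)⁻¹ * (Real.exp 1 * a)⁻¹ :=
            mul_le_mul_of_nonneg_left (aux_tau ha0 hτ) hinv
        _ = M := rfl
    · rw [hφ]
      simp [Set.indicator_of_notMem hz]
  calc ∫⁻ ω, {ω' | ‖X ω'‖ ≤ ‖x0‖ / 2}.indicator
          (fun ω' => ENNReal.ofReal |Real.log ‖X ω'‖|) ω ∂P
      = ∫⁻ z, φ z ∂(P.map X) := (lintegral_map' hφm.aemeasurable hXm).symm
    _ = ∫⁻ z, φ z ∂(volume.withDensity f) := by rw [hmap]
    _ = ∫⁻ z, (f * φ) z := lintegral_withDensity_eq_lintegral_mul volume hfm hφm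
    _ ≤ ∫⁻ z, ENNReal.ofReal M * φ z := lintegral_mono hbound
    _ = ENNReal.ofReal M * ∫⁻ z, φ z := lintegral_const_mul _ hφm
    _ = ((ENNReal.ofReal M * ∫⁻ z, φ z).toNNReal : ℝ≥0∞) := (ENNReal.coe_toNNReal hBne).symm
end
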